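/- arXiv:1506.03940 — 3 statements merged into one kernel-verified Lean document; each statement's English description precedes it below -/
import Mathlib

section
/- For fixed z' ∈ 𝔹^n and an automorphism f = (f_0,…,f_n) of ℂ × 𝔹^n whose components f_1,…,f_n do not depend on z_0, the map z_0 ↦ f_0(z_0, z') is an injective entire function ℂ → ℂ, hence an affine map z_0 ↦ a z_0 + b with a ≠ 0. -/
open Polynomial Metric Set Topology Filter

section Helpers

lemma injective_poly_natDegree_le_one (p : Polynomial ℂ)
    (hinj : Function.Injective fun z : ℂ => p.eval z) : p.natDegree ≤ 1 := by
  by_contra hd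
  push_neg at hd
  set d := p.natDegree with hdd
  have hd2 : 2 ≤ d := hd
  have hd1 : 1 ≤ d := by omega
  -- for each w, p - C w has all roots equal
  have key : ∀ w : ℂ, ∃ a : ℂ, p.eval a = w ∧ p - C w = C p.leadingCoeff * (X - C a) ^ d := by
    intro w
    have hq0 : p - C w ≠ 0 := fun h => by
      have := natDegree_sub_C (p := p) (a := w)
      rw [h, natDegree_zero] at this; omega
    have hsp : (p - C w).Splits := IsAlgClosed.splits _
    have hcard : Multiset.card (p - C w).roots = d := by
      have := hsp.natDegree_eq_card_roots
      simpa [natDegree_sub_C] using this.symm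
    have hne : (p - C w).roots ≠ 0 := by
      intro h; rw [h] at hcard; simp at hcard; omega
    obtain ⟨a, ha⟩ := Multiset.exists_mem_of_ne_zero hne
    have hroot : ∀ b ∈ (p - C w).roots, b = a := by
      intro b hb
      have hb' : p.eval b = w := by
        simpa [IsRoot, sub_eq_zero] using (mem_roots hq0).1 hb
      have ha' : p.eval a = w := by
        simpa [IsRoot, sub_eq_zero] using (mem_roots hq0).1 ha
      exact hinj (by simp [hb', ha'])
    have hrep : (p - C w).roots = Multiset.replicate d a :=
      Multiset.eq_replicate.2 ⟨hcard, hroot⟩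
    have hfac := hsp.eq_prod_roots
    rw [hrep] at hfac
    have hlc : (p - C w).leadingCoeff = p.leadingCoeff := by
      unfold leadingCoeff
      rw [natDegree_sub_C, coeff_sub, coeff_C, if_neg (by omega)]
      ring
    refine ⟨a, ?_, ?_⟩
    · simpa [IsRoot, sub_eq_zero] using (mem_roots hq0).1 ha
    · rw [hfac, hlc, Multiset.map_replicate, Multiset.prod_replicate]
  obtain ⟨a, ha, hfa⟩ := key 0
  obtain ⟨b, hb, hfb⟩ := key 1
  have hab : a ≠ b := fun h => by rw [h, hb] at ha; exact one_ne_zero ha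
  have hlc : p.leadingCoeff ≠ 0 := by
    intro h
    have hp0 : p = 0 := leadingCoeff_eq_zero.1 h
    rw [hp0, natDegree_zero] at hdd; omega
  -- compare derivatives
  have hder : derivative (p - C (0:ℂ)) = derivative (p - C (1:ℂ)) := by simp
  rw [hfa, hfb] at hder
  rw [derivative_C_mul, derivative_C_mul, derivative_X_sub_C_pow, derivative_X_sub_C_pow] at hder
  have := congrArg (Polynomial.eval a) hder
  simp only [eval_mul, eval_C, eval_pow, eval_sub, eval_X, sub_self] at this
  have hz : (0:ℂ) ^ (d-1) = 0 := by
    rw [zero_pow]; omega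
  rw [hz, mul_zero, mul_zero] at this
  have hab' : (a - b) ^ (d - 1) = 0 := by
    rcases mul_eq_zero.1 this.symm with h | h
    · exact absurd h hlc
    · rcases mul_eq_zero.1 h with h' | h'
      · exact absurd h' (Nat.cast_ne_zero.2 (by omega : d ≠ 0))
      · exact h'
  exact (sub_ne_zero.2 hab) (pow_eq_zero_iff (by omega : d - 1 ≠ 0) |>.1 hab')


lemma deriv_growth {φ : ℂ → ℂ} (hφ : Differentiable ℂ φ) {C : ℝ} {k : ℕ}
    (h : ∀ z, ‖φ z‖ ≤ C * max 1 ‖z‖ ^ (k + 1)) :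
    ∀ z, ‖deriv φ z‖ ≤ C * 2 ^ (k + 1) * max 1 ‖z‖ ^ k := by
  intro c
  set R : ℝ := max 1 ‖c‖ with hR
  have hR1 : (1:ℝ) ≤ R := le_max_left _ _
  have hR0 : 0 < R := lt_of_lt_of_le one_pos hR1
  have hC0 : 0 ≤ C := by
    have := (norm_nonneg (φ 0)).trans (h 0)
    simpa using this
  have key : ‖deriv φ c‖ ≤ C * (2 * R) ^ (k + 1) / R := by
    apply Complex.norm_deriv_le_of_forall_mem_sphere_norm_le hR0 hφ.diffContOnCl
    intro z hz
    have hz' : ‖z‖ ≤ 2 * R := by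
      have : ‖z - c‖ = R := by simpa [mem_sphere_iff_norm] using hz
      calc ‖z‖ = ‖z - c + c‖ := by ring_nf
        _ ≤ ‖z - c‖ + ‖c‖ := norm_add_le _ _
        _ ≤ R + R := by rw [this]; exact add_le_add le_rfl (le_max_right 1 ‖c‖)
        _ = 2 * R := by ring
    have hmax : max 1 ‖z‖ ≤ 2 * R := max_le (by linarith) hz'
    calc ‖φ z‖ ≤ C * max 1 ‖z‖ ^ (k + 1) := h z
      _ ≤ C * (2 * R) ^ (k + 1) := by
          apply mul_le_mul_of_nonneg_left (pow_le_pow_left₀ (by positivity) hmax _) hC0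
  calc ‖deriv φ c‖ ≤ C * (2 * R) ^ (k + 1) / R := key
    _ = C * 2 ^ (k + 1) * R ^ k := by
        rw [mul_pow]; field_simp; ring
  -- done

lemma growth_iteratedDeriv_zero {k : ℕ} : ∀ {φ : ℂ → ℂ}, Differentiable ℂ φ → ∀ {C : ℝ},
    (∀ z, ‖φ z‖ ≤ C * max 1 ‖z‖ ^ k) → iteratedDeriv (k + 1) φ = 0 := by
  induction k with
  | zero =>
    intro φ hφ C h
    have hb : Bornology.IsBounded (Set.range φ) := by
      rw [Metric.isBounded_iff_subset_closedBall 0]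
      refine ⟨C, ?_⟩
      rintro _ ⟨z, rfl⟩
      simpa [Metric.mem_closedBall] using (h z).trans (by simp)
    have hconst : ∀ z, φ z = φ 0 := fun z => hφ.apply_eq_apply_of_bounded hb z 0
    have : φ = fun _ => φ 0 := funext hconst
    rw [iteratedDeriv_one, this]
    ext z; simp
  | succ k ih =>
    intro φ hφ C h
    have hφ' : Differentiable ℂ (deriv φ) := by
      have := (Complex.analyticOnNhd_univ_iff_differentiable.2 hφ).deriv
      exact Complex.analyticOnNhd_univ_iff_differentiable.1 this
    have h' := deriv_growth hφ h
    have := ih hφ' h'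
    rw [iteratedDeriv_succ']
    exact this


lemma entire_growth_eq_poly {φ : ℂ → ℂ} (hφ : Differentiable ℂ φ) {k : ℕ}
    (hzero1 : iteratedDeriv (k + 1) φ = 0) :
    ∃ p : Polynomial ℂ, ∀ z, φ z = p.eval z := by
  have hzero : ∀ n, k + 1 ≤ n → iteratedDeriv n φ = 0 := by
    intro n hn
    induction n with
    | zero => omega
    | succ m ih =>
      rcases Nat.lt_or_ge m (k + 1) with hlt | hge
      · have : m + 1 = k + 1 := by omega
        rw [this]; exact hzero1
      · rw [iteratedDeriv_succ, ih hge]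
        rw [show (0 : ℂ → ℂ) = fun _ => (0:ℂ) from rfl]
        ext z; simp
  set coef : ℕ → ℂ := fun n => (Nat.factorial n : ℂ)⁻¹ * iteratedDeriv n φ 0 with hcoef
  refine ⟨∑ n ∈ Finset.range (k + 1), Polynomial.C (coef n) * Polynomial.X ^ n, fun z => ?_⟩
  have htay := Complex.taylorSeries_eq_of_entire' (c := 0) (z := z) hφ
  rw [← htay, tsum_eq_sum (s := Finset.range (k + 1)) ?_]
  · simp [Polynomial.eval_finset_sum, hcoef]
  · intro b hb
    have hb' : k + 1 ≤ b := by simpa using hb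
    rw [hzero b hb']; simp

lemma injective_entire_growth {φ : ℂ → ℂ} (hφ : Differentiable ℂ φ)
    (hinj : Function.Injective φ) :
    (∃ C : ℝ, ∃ k : ℕ, ∀ z : ℂ, ‖φ z‖ ≤ C * max 1 ‖z‖ ^ k) := by
  -- Step 1: minimum of ‖φ z - φ 0‖ on the unit sphere
  have hsne : (sphere (0:ℂ) 1).Nonempty := NormedSpace.sphere_nonempty.2 zero_le_one
  obtain ⟨z₁, hz₁s, hz₁min⟩ := (isCompact_sphere (0:ℂ) 1).exists_isMinOn hsne
    (((hφ.continuous.sub continuous_const).norm).continuousOn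
      (s := sphere (0:ℂ) 1) : ContinuousOn (fun z => ‖φ z - φ 0‖) _)
  set ε : ℝ := ‖φ z₁ - φ 0‖ with hε
  have hz₁0 : z₁ ≠ 0 := by
    intro h
    have : ‖z₁‖ = 1 := by simpa using hz₁s
    rw [h] at this; simp at this
  have hε0 : 0 < ε := by
    rw [hε, norm_pos_iff, sub_ne_zero]
    exact fun h => hz₁0 (hinj h)
  -- Step 2: open mapping gives a ball in the image
  have hball : ball (φ 0) (ε / 2) ⊆ φ '' closedBall 0 1 := by
    apply DiffContOnCl.ball_subset_image_closedBall hφ.diffContOnCl one_pos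
    · intro z hz; exact hz₁min hz
    · have h1 : ∀ᶠ z in 𝓝[≠] (0:ℂ), φ z ≠ φ 0 := by
        filter_upwards [eventually_mem_nhdsWithin] with z hz h
        exact hz (hinj h)
      exact h1.frequently.filter_mono nhdsWithin_le_nhds
  -- Step 3: lower bound outside the unit ball
  have hout : ∀ z : ℂ, 1 < ‖z‖ → ε / 2 ≤ ‖φ z - φ 0‖ := by
    intro z hz
    by_contra hlt
    push_neg at hlt
    obtain ⟨w, hw, hwz⟩ := hball (by simpa [mem_ball, dist_eq_norm] using hlt)
    have hwz' : w = z := hinj hwz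
    rw [hwz'] at hw
    have : ‖z‖ ≤ 1 := by simpa [mem_closedBall] using hw
    linarith
  -- Step 4: the function H(w) = 1/(φ(1/w) - φ 0) and its entire extension
  set H : ℂ → ℂ := fun w => (φ w⁻¹ - φ 0)⁻¹ with hHdef
  have hsub_ne : ∀ z : ℂ, z ≠ 0 → φ z - φ 0 ≠ 0 := by
    intro z hz
    exact sub_ne_zero.2 fun h => hz (hinj h)
  have hHdiff : ∀ w : ℂ, w ≠ 0 → DifferentiableAt ℂ H w := by
    intro w hw
    have h1 : DifferentiableAt ℂ (fun w : ℂ => φ w⁻¹ - φ 0) w :=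
      ((hφ.differentiableAt).comp w (differentiableAt_inv hw)).sub_const _
    exact h1.inv (hsub_ne _ (inv_ne_zero hw))
  have hHbound : ∀ w : ℂ, w ≠ 0 → ‖w‖ < 1 → ‖H w‖ ≤ 2 / ε := by
    intro w hw hw1
    have h1 : 1 < ‖w⁻¹‖ := by
      rw [norm_inv]
      rw [lt_inv_comm₀] <;> [skip; norm_num; exact norm_pos_iff.2 hw]
      simpa using hw1
    rw [hHdef]
    simp only [norm_inv]
    rw [inv_le_comm₀ (lt_of_lt_of_le (by positivity) (hout _ h1)) (by positivity), inv_div]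
    exact hout _ h1
  set L := limUnder (𝓝[≠] (0:ℂ)) H with hL
  set Hext := Function.update H 0 L with hHextdef
  have hHextDiff : Differentiable ℂ Hext := by
    intro w
    rcases eq_or_ne w 0 with rfl | hw
    · have hd : DifferentiableOn ℂ H (ball (0:ℂ) 1 \ {0}) := fun x hx =>
        (hHdiff x hx.2).differentiableWithinAt
      have hb : BddAbove (norm ∘ H '' (ball (0:ℂ) 1 \ {0})) := by
        refine ⟨2 / ε, ?_⟩
        rintro y ⟨x, ⟨hx1, hx2⟩, rfl⟩
        exact hHbound x hx2 (by simpa [mem_ball, dist_eq_norm] using hx1)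
      have := Complex.differentiableOn_update_limUnder_of_bddAbove
        (ball_mem_nhds (0:ℂ) one_pos) hd hb
      exact (this 0 (mem_ball_self one_pos)).differentiableAt
        (isOpen_ball.mem_nhds (mem_ball_self one_pos))
    · have heq : Hext =ᶠ[𝓝 w] H := by
        filter_upwards [isOpen_ne.mem_nhds hw] with x hx
        simp [hHextdef, Function.update_of_ne hx]
      exact heq.differentiableAt_iff.2 (hHdiff w hw)
  have hHextne : ∀ w : ℂ, w ≠ 0 → Hext w ≠ 0 := by
    intro w hw
    rw [hHextdef, Function.update_of_ne hw]
    exact inv_ne_zero (hsub_ne _ (inv_ne_zero hw))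
  -- Step 5: order of vanishing at 0
  have hA : AnalyticAt ℂ Hext 0 := hHextDiff.analyticAt 0
  have hord : analyticOrderAt Hext 0 ≠ ⊤ := by
    intro h
    rw [analyticOrderAt_eq_top] at h
    have hev := h
    obtain ⟨w, hw0, hwne⟩ :=
      ((hev.filter_mono nhdsWithin_le_nhds).and
        (eventually_mem_nhdsWithin (s := {(0:ℂ)}ᶜ))).exists
    exact hHextne w hwne hw0
  set k : ℕ := (analyticOrderAt Hext 0).toNat with hk
  have hkeq : analyticOrderAt Hext 0 = (k : ℕ∞) := (ENat.coe_toNat hord).symm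
  obtain ⟨ψ, hψa, hψ0, hψeq⟩ := hA.analyticOrderAt_eq_natCast.1 hkeq
  -- Step 6: quantitative factorization near 0
  set m : ℝ := ‖ψ 0‖ / 2 with hm
  have hm0 : 0 < m := by
    have := norm_pos_iff.2 hψ0
    rw [hm]; linarith
  have hev2 : ∀ᶠ w in 𝓝 (0:ℂ), m ≤ ‖ψ w‖ := by
    have h := Metric.tendsto_nhds.1 hψa.continuousAt.tendsto m hm0
    filter_upwards [h] with w hw
    have h1 : ‖ψ w - ψ 0‖ < m := by rwa [dist_eq_norm] at hw
    have h2 : ‖ψ 0‖ - ‖ψ w‖ ≤ ‖ψ 0 - ψ w‖ := norm_sub_norm_le _ _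
    rw [norm_sub_rev] at h2
    rw [hm] at *
    linarith
  obtain ⟨δ, hδ0, hδ⟩ := Metric.eventually_nhds_iff_ball.1 (hψeq.and hev2)
  set δ' : ℝ := min δ 1 with hδ'
  have hδ'0 : 0 < δ' := lt_min hδ0 one_pos
  have hδ'1 : δ' ≤ 1 := min_le_right _ _
  -- Step 7: growth bound
  obtain ⟨M, hM⟩ := (isCompact_closedBall (0:ℂ) (1/δ')).exists_bound_of_continuousOn
    hφ.continuous.continuousOn
  refine ⟨max M (1/m + ‖φ 0‖), k, fun z => ?_⟩
  have hmax1 : (1:ℝ) ≤ max 1 ‖z‖ := le_max_left _ _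
  have hmaxpow : (1:ℝ) ≤ max 1 ‖z‖ ^ k := one_le_pow₀ hmax1
  rcases le_or_gt ‖z‖ (1/δ') with hz | hz
  · have h1 : ‖φ z‖ ≤ M := hM z (by simpa [mem_closedBall] using hz)
    calc ‖φ z‖ ≤ M := h1
      _ = M * 1 := by ring
      _ ≤ max M (1/m + ‖φ 0‖) * max 1 ‖z‖ ^ k := by
          have hM0 : 0 ≤ M :=
            (norm_nonneg (φ 0)).trans (hM 0 (by simp [mem_closedBall]; positivity))
          exact mul_le_mul (le_max_left _ _) hmaxpow zero_le_one (hM0.trans (le_max_left _ _))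
  · -- ‖z‖ > 1/δ'
    have hz0 : z ≠ 0 := by
      intro h
      rw [h, norm_zero] at hz
      have : (0:ℝ) < 1/δ' := by positivity
      linarith
    have hznorm : 0 < ‖z‖ := norm_pos_iff.2 hz0
    have hz1 : 1 < ‖z‖ := by
      have h1 : (1:ℝ) ≤ 1/δ' := by rw [le_div_iff₀ hδ'0]; linarith
      linarith
    have hzinv : ‖z⁻¹‖ < δ' := by
      rw [norm_inv, inv_lt_comm₀ hznorm hδ'0]
      rwa [one_div] at hz
    obtain ⟨hfac, hψw⟩ := hδ z⁻¹ (by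
      rw [mem_ball, dist_zero_right]
      exact hzinv.trans_le (min_le_left _ _))
    have hzinv0 : z⁻¹ ≠ 0 := inv_ne_zero hz0
    have hHw : Hext z⁻¹ = (φ z - φ 0)⁻¹ := by
      rw [hHextdef, Function.update_of_ne hzinv0, hHdef]
      simp [inv_inv]
    have hnorm : ‖φ z - φ 0‖⁻¹ = ‖z⁻¹‖ ^ k * ‖ψ z⁻¹‖ := by
      rw [← norm_inv, ← hHw, hfac]
      simp [norm_smul, sub_zero]
    have hlow : m * ‖z‖⁻¹ ^ k ≤ ‖φ z - φ 0‖⁻¹ := by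
      rw [hnorm, norm_inv, mul_comm]
      exact mul_le_mul_of_nonneg_left hψw (by positivity)
    have hpos : 0 < m * ‖z‖⁻¹ ^ k := mul_pos hm0 (pow_pos (inv_pos.2 hznorm) _)
    have hup : ‖φ z - φ 0‖ ≤ (m * ‖z‖⁻¹ ^ k)⁻¹ := by
      rw [← inv_inv (‖φ z - φ 0‖)]
      exact inv_anti₀ hpos hlow
    have heq2 : (m * ‖z‖⁻¹ ^ k)⁻¹ = ‖z‖ ^ k / m := by
      rw [mul_inv, inv_pow, inv_inv]
      ring
    rw [heq2] at hup
    have hφz : ‖φ z‖ ≤ ‖z‖ ^ k / m + ‖φ 0‖ := by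
      have h3 : ‖φ z‖ - ‖φ 0‖ ≤ ‖φ z - φ 0‖ := norm_sub_norm_le _ _
      linarith
    have hpow1 : (1:ℝ) ≤ ‖z‖ ^ k := one_le_pow₀ hz1.le
    have hmz : max 1 ‖z‖ = ‖z‖ := max_eq_right hz1.le
    calc ‖φ z‖ ≤ ‖z‖ ^ k / m + ‖φ 0‖ := hφz
      _ ≤ (1/m + ‖φ 0‖) * ‖z‖ ^ k := by
          rw [add_mul, one_div, div_eq_inv_mul, mul_comm m⁻¹ (‖z‖ ^ k)]
          gcongr
          exact le_mul_of_one_le_right (norm_nonneg _) hpow1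
      _ ≤ max M (1/m + ‖φ 0‖) * max 1 ‖z‖ ^ k := by
          rw [hmz]
          exact mul_le_mul_of_nonneg_right (le_max_right _ _) (by positivity)


lemma injective_entire_affine {φ : ℂ → ℂ} (hφ : Differentiable ℂ φ)
    (hinj : Function.Injective φ) :
    ∃ a b : ℂ, a ≠ 0 ∧ ∀ z, φ z = a * z + b := by
  obtain ⟨C, k, hgrow⟩ := injective_entire_growth hφ hinj
  obtain ⟨p, hp⟩ := entire_growth_eq_poly hφ (growth_iteratedDeriv_zero hφ hgrow)
  have hpinj : Function.Injective fun z : ℂ => p.eval z := by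
    intro x y h
    apply hinj
    rw [hp, hp]
    exact h
  have hdeg := injective_poly_natDegree_le_one p hpinj
  have hform := Polynomial.eq_X_add_C_of_natDegree_le_one hdeg
  refine ⟨p.coeff 1, p.coeff 0, ?_, ?_⟩
  · intro h
    have h01 : φ 0 = φ 1 := by
      rw [hp, hp, hform]
      simp [h]
    exact one_ne_zero (hinj h01).symm
  · intro z
    rw [hp, hform]
    simp

end Helpers

noncomputable section

/-- The unit ball `𝔹^n = {z' ∈ ℂ^n : Σ |z'_i|² < 1}`. -/
def balln (n : ℕ) : Set (Fin n → ℂ) := {z' | ∑ i : Fin n, ‖z' i‖ ^ 2 < 1}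

/-- The domain `ℂ × 𝔹^n`. -/
def CBall (n : ℕ) : Set (ℂ × (Fin n → ℂ)) := {z | z.2 ∈ balln n}

/-- For fixed `z' ∈ 𝔹^n` and an automorphism `f = (f_0,…,f_n)` of
`ℂ × 𝔹^n` whose components `f_1, …, f_n` do not depend on `z_0`, the map
`z_0 ↦ f_0(z_0, z')` is an injective entire function `ℂ → ℂ`, hence an affine map
`z_0 ↦ a z_0 + b` with `a ≠ 0`. -/
theorem aut_CBall_first_component_affine (n : ℕ)
    (f g : ℂ × (Fin n → ℂ) → ℂ × (Fin n → ℂ))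
    (hfm : Set.MapsTo f (CBall n) (CBall n)) (hgm : Set.MapsTo g (CBall n) (CBall n))
    (hinv : Set.InvOn g f (CBall n) (CBall n))
    (hf : DifferentiableOn ℂ f (CBall n)) (hg : DifferentiableOn ℂ g (CBall n))
    (hindep : ∀ z' ∈ balln n, ∀ w w' : ℂ, (f (w, z')).2 = (f (w', z')).2)
    (z' : Fin n → ℂ) (hz' : z' ∈ balln n) :
    Function.Injective (fun w : ℂ => (f (w, z')).1) ∧
    ∃ a b : ℂ, a ≠ 0 ∧ ∀ w : ℂ, (f (w, z')).1 = a * w + b := by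
  have hmem : ∀ w : ℂ, (w, z') ∈ CBall n := fun w => hz'
  have hinj : Function.Injective (fun w : ℂ => (f (w, z')).1) := by
    intro w w' h
    have h2 := hindep z' hz' w w'
    have hfe : f (w, z') = f (w', z') := Prod.ext h h2
    have e1 := hinv.1 (hmem w)
    have e2 := hinv.1 (hmem w')
    have he : (w, z') = (w', z') := by rw [← e1, ← e2, hfe]
    exact congrArg Prod.fst he
  have hopen : IsOpen (CBall n) := by
    have h1 : Continuous fun z' : Fin n → ℂ => ∑ i, ‖z' i‖ ^ 2 := by fun_prop
    have hballn : IsOpen (balln n) := isOpen_lt h1 continuous_const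
    exact hballn.preimage continuous_snd
  have hφdiff : Differentiable ℂ (fun w : ℂ => (f (w, z')).1) := by
    intro w
    have hf1 : DifferentiableAt ℂ f (w, z') :=
      hf.differentiableAt (hopen.mem_nhds (hmem w))
    have hemb : DifferentiableAt ℂ (fun w : ℂ => (w, z')) w :=
      differentiableAt_id.prodMk (differentiableAt_const _)
    exact (hf1.comp w hemb).fst
  obtain ⟨a, b, ha, hab⟩ := injective_entire_affine hφdiff hinj
  exact ⟨hinj, a, b, ha, hab⟩

end
end

section
/- Every holomorphic function on D^{p,q} (with p > 1, q > 0) extends to a holomorphic function on ℂ^{p+q}. -/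
noncomputable section
open Complex Metric Set Function MeasureTheory Filter intervalIntegral

namespace HartogsAux


variable {n q : ℕ}

/-- The defining quadratic form. -/
def SQ (q : ℕ) {n : ℕ} (z : Fin n → ℂ) : ℝ :=
  ∑ i : Fin n, (if (i : ℕ) < q then (-1 : ℝ) else 1) * ‖z i‖ ^ 2

/-- negative-part sum -/
def Qs (q : ℕ) {n : ℕ} (z : Fin n → ℂ) : ℝ :=
  ∑ i : Fin n, (if (i : ℕ) < q then ‖z i‖ ^ 2 else 0)

lemma Qs_nonneg (z : Fin n → ℂ) : 0 ≤ Qs q z :=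
  Finset.sum_nonneg fun i _ => by split <;> positivity

lemma continuous_SQ : Continuous (SQ q (n := n)) := by
  refine continuous_finset_sum _ fun i _ => ?_
  exact (continuous_const.mul (((continuous_apply i).norm).pow 2))

lemma continuous_Qs : Continuous (Qs q (n := n)) := by
  refine continuous_finset_sum _ fun i _ => ?_
  split
  · exact ((continuous_apply i).norm).pow 2
  · exact continuous_const

lemma SQ_update (k : Fin n) (z : Fin n → ℂ) (ζ : ℂ) :
    SQ q (Function.update z k ζ) =
      SQ q z - (if (k : ℕ) < q then (-1 : ℝ) else 1) * ‖z k‖ ^ 2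
        + (if (k : ℕ) < q then (-1 : ℝ) else 1) * ‖ζ‖ ^ 2 := by
  have h1 : ∀ w : Fin n → ℂ, SQ q w =
      (if (k : ℕ) < q then (-1 : ℝ) else 1) * ‖w k‖ ^ 2 +
        ∑ i ∈ Finset.univ.erase k, (if (i : ℕ) < q then (-1 : ℝ) else 1) * ‖w i‖ ^ 2 := by
    intro w
    rw [SQ, ← Finset.add_sum_erase _ _ (Finset.mem_univ k)]
  rw [h1, h1 z, Function.update_self]
  have h2 : ∑ i ∈ Finset.univ.erase k,
      (if (i : ℕ) < q then (-1 : ℝ) else 1) * ‖Function.update z k ζ i‖ ^ 2 =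
      ∑ i ∈ Finset.univ.erase k, (if (i : ℕ) < q then (-1 : ℝ) else 1) * ‖z i‖ ^ 2 := by
    refine Finset.sum_congr rfl fun i hi => ?_
    rw [Function.update_of_ne (Finset.ne_of_mem_erase hi)]
  rw [h2]; ring

/-- For an index `k` with `q ≤ k`, updating coordinate `k`: -/
lemma SQ_update_pos (k : Fin n) (hk : q ≤ (k : ℕ)) (z : Fin n → ℂ) (ζ : ℂ) :
    SQ q (Function.update z k ζ) = SQ q z - ‖z k‖ ^ 2 + ‖ζ‖ ^ 2 := by
  rw [SQ_update]; rw [if_neg (not_lt.2 hk)]; ring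

lemma SQ_sub_ge (k : Fin n) (hk : q ≤ (k : ℕ)) (z : Fin n → ℂ) :
    -Qs q z ≤ SQ q z - ‖z k‖ ^ 2 := by
  have key : SQ q z + Qs q z = ∑ i : Fin n, (if (i : ℕ) < q then 0 else ‖z i‖ ^ 2) := by
    rw [SQ, Qs, ← Finset.sum_add_distrib]
    refine Finset.sum_congr rfl fun i _ => ?_
    split <;> ring
  have h2 : ‖z k‖ ^ 2 ≤ ∑ i : Fin n, (if (i : ℕ) < q then 0 else ‖z i‖ ^ 2) := by
    have := Finset.single_le_sum (f := fun i : Fin n => (if (i : ℕ) < q then 0 else ‖z i‖ ^ 2))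
      (fun i _ => by split <;> positivity) (Finset.mem_univ k)
    rwa [if_neg (not_lt.2 hk)] at this
  linarith



/-- A segment path staying in a set gives `JoinedIn`. -/
lemma joinedIn_segment {E : Type*} [NormedAddCommGroup E] [NormedSpace ℝ E] {s : Set E}
    {x y : E} (h : ∀ t : ℝ, t ∈ Set.Icc (0:ℝ) 1 → (1 - t) • x + t • y ∈ s) :
    JoinedIn s x y := by
  refine ⟨⟨⟨fun t => (1 - (t : ℝ)) • x + (t : ℝ) • y, by fun_prop⟩, by simp, by simp⟩,
    fun t => h t t.2⟩

lemma isPreconnected_norm_sq_gt (c : ℝ) : IsPreconnected {u : ℂ | c < ‖u‖ ^ 2} := by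
  set a : ℝ := Real.sqrt (max c 0) with ha
  have ha0 : 0 ≤ a := Real.sqrt_nonneg _
  have haSq : ∀ r : ℝ, a < r → c < r ^ 2 := by
    intro r hr
    have h1 : a ^ 2 = max c 0 := Real.sq_sqrt (le_max_right c 0)
    have : a ^ 2 < r ^ 2 := by nlinarith
    calc c ≤ max c 0 := le_max_left _ _
    _ = a ^ 2 := h1.symm
    _ < r ^ 2 := this
  set b : ℂ := ((a + 1 : ℝ) : ℂ) with hb
  have hbnorm : ‖b‖ = a + 1 := by
    rw [hb, Complex.norm_real, Real.norm_of_nonneg (by linarith)]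
  have hbmem : b ∈ {u : ℂ | c < ‖u‖ ^ 2} := by
    simp only [mem_setOf_eq, hbnorm]; exact haSq _ (by linarith)
  refine (IsPathConnected.isConnected ⟨b, hbmem, fun {u} hu => JoinedIn.symm ?_⟩).isPreconnected
  rcases eq_or_ne u 0 with rfl | hu0
  · -- c < 0 here
    have hc0 : c < 0 := by simpa using hu
    refine joinedIn_segment fun t ht => ?_
    simp only [mem_setOf_eq, smul_zero, zero_add]
    calc c < 0 := hc0
    _ ≤ ‖t • b‖ ^ 2 := by positivity
  · have hun : 0 < ‖u‖ := norm_pos_iff.2 hu0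
    set s : ℝ := (a + 1) / ‖u‖ with hs
    have hs0 : 0 < s := by positivity
    set mid : ℂ := s • u with hmid
    have hmidnorm : ‖mid‖ = a + 1 := by
      rw [hmid, norm_smul, Real.norm_of_nonneg hs0.le, hs]
      field_simp
    have husq : c < ‖u‖ ^ 2 := hu
    have j1 : JoinedIn {u : ℂ | c < ‖u‖ ^ 2} u mid := by
      refine joinedIn_segment fun t ht => ?_
      have : (1 - t) • u + t • (s • u) = ((1 - t) + t * s) • u := by
        rw [smul_smul, ← add_smul]
      rw [this]
      have hκ : min 1 s ≤ (1 - t) + t * s := by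
        rcases le_total 1 s with h | h
        · have : min 1 s = 1 := min_eq_left h
          nlinarith [ht.1, ht.2]
        · have : min 1 s = s := min_eq_right h
          nlinarith [ht.1, ht.2]
      have hκ0 : 0 < min 1 s := lt_min one_pos hs0
      have hnorm : min 1 s * ‖u‖ ≤ ‖((1 - t) + t * s) • u‖ := by
        rw [norm_smul, Real.norm_of_nonneg (by linarith)]
        exact mul_le_mul_of_nonneg_right hκ hun.le
      simp only [mem_setOf_eq]
      have hcases : c < (min 1 s * ‖u‖) ^ 2 := by
        rcases le_total 1 s with h | h
        · rw [min_eq_left h, one_mul]; exact husq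
        · rw [min_eq_right h, hs]
          have : (a + 1) / ‖u‖ * ‖u‖ = a + 1 := div_mul_cancel₀ _ hun.ne'
          rw [this]; exact haSq _ (by linarith)
      calc c < (min 1 s * ‖u‖) ^ 2 := hcases
      _ ≤ ‖((1 - t) + t * s) • u‖ ^ 2 := by
          have h0 : 0 ≤ min 1 s * ‖u‖ := by positivity
          nlinarith [hnorm]
    have j2 : JoinedIn {u : ℂ | c < ‖u‖ ^ 2} mid b := by
      have hrank : 1 < Module.rank ℝ ℂ := by
        rw [Complex.rank_real_complex]; norm_num
      have hsp : IsPathConnected (sphere (0:ℂ) (a+1)) :=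
        isPathConnected_sphere hrank 0 (by linarith)
      have hsub : sphere (0:ℂ) (a+1) ⊆ {u : ℂ | c < ‖u‖ ^ 2} := by
        intro w hw
        simp only [mem_sphere_iff_norm, sub_zero] at hw
        simp only [mem_setOf_eq, hw]
        exact haSq _ (by linarith)
      have h1 : mid ∈ sphere (0:ℂ) (a+1) := by
        simp [mem_sphere_iff_norm, hmidnorm]
      have h2 : b ∈ sphere (0:ℂ) (a+1) := by
        simp [mem_sphere_iff_norm, hbnorm]
      exact (hsp.joinedIn mid h1 b h2).mono hsub
    exact j1.trans j2



lemma update_differentiableAt {N : ℕ} (w : Fin N → ℂ) (k : Fin N) (u : ℂ) :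
    DifferentiableAt ℂ (fun v : ℂ => Function.update w k v) u := by
  rw [differentiableAt_pi]
  intro i
  by_cases hik : i = k
  · subst hik; simp only [Function.update_self]; exact differentiableAt_fun_id
  · simp only [Function.update_of_ne hik]; exact differentiableAt_const _

lemma lipschitzOnWith_of_bounded {N : ℕ} {Φ : (Fin N → ℂ) → ℂ} {z₀ : Fin N → ℂ} {δ M : ℝ}
    (hδ : 0 < δ) (hdiff : ∀ z ∈ ball z₀ δ, DifferentiableAt ℂ Φ z)
    (hM : ∀ z ∈ ball z₀ δ, ‖Φ z‖ ≤ M) :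
    LipschitzOnWith (Real.nnabs ((N : ℝ) * (M / (δ/4)))) Φ (ball z₀ (δ/4)) := by
  have hM0 : 0 ≤ M := le_trans (norm_nonneg _) (hM z₀ (mem_ball_self hδ))
  set C₁ : ℝ := M / (δ/4) with hC₁
  have hC₁0 : 0 ≤ C₁ := by positivity
  -- one-coordinate step
  have step : ∀ (w : Fin N → ℂ), (∀ i, dist (w i) (z₀ i) < δ/4) → ∀ (k : Fin N) (α β : ℂ),
      dist α (z₀ k) < δ/4 → dist β (z₀ k) < δ/4 →
      dist (Φ (Function.update w k α)) (Φ (Function.update w k β)) ≤ C₁ * dist α β := by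
    intro w hw k α β hα hβ
    set h : ℂ → ℂ := fun u => Φ (Function.update w k u) with hh
    have hball : ∀ u ∈ ball (z₀ k) (δ/2), Function.update w k u ∈ ball z₀ δ := by
      intro u hu
      rw [mem_ball, dist_pi_lt_iff hδ]
      intro i
      by_cases hik : i = k
      · subst hik
        rw [Function.update_self]
        calc dist u (z₀ i) < δ/2 := mem_ball.1 hu
        _ < δ := by linarith
      · rw [Function.update_of_ne hik]
        calc dist (w i) (z₀ i) < δ/4 := hw i
        _ < δ := by linarith
    have hdiffAt : ∀ u ∈ ball (z₀ k) (δ/2), DifferentiableAt ℂ h u := by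
      intro u hu
      exact (hdiff _ (hball u hu)).comp u (update_differentiableAt w k u)
    have hbound : ∀ u ∈ ball (z₀ k) (δ/2), ‖h u‖ ≤ M := fun u hu => hM _ (hball u hu)
    have hderiv : ∀ u ∈ ball (z₀ k) (δ/4), ‖deriv h u‖ ≤ C₁ := by
      intro u hu
      have hcb : closedBall u (δ/4) ⊆ ball (z₀ k) (δ/2) := by
        intro v hv
        rw [mem_ball]
        calc dist v (z₀ k) ≤ dist v u + dist u (z₀ k) := dist_triangle _ _ _
        _ < δ/4 + δ/4 := add_lt_add_of_le_of_lt (mem_closedBall.1 hv) (mem_ball.1 hu)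
        _ = δ/2 := by ring
      rw [← Complex.cderiv_eq_deriv isOpen_ball
        (fun v hv => (hdiffAt v hv).differentiableWithinAt) (by linarith) hcb]
      exact Complex.norm_cderiv_le (by linarith)
        (fun v hv => hbound v (hcb (sphere_subset_closedBall hv)))
    have := Convex.norm_image_sub_le_of_norm_deriv_le (f := h)
      (fun u hu => hdiffAt u (ball_subset_ball (by linarith) hu))
      hderiv (convex_ball _ _) (mem_ball.2 hα) (mem_ball.2 hβ)
    rw [dist_eq_norm, dist_eq_norm]
    simpa [norm_sub_rev] using this
  -- telescoping
  apply LipschitzOnWith.of_dist_le_mul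
  intro x hx y hy
  have hx' : ∀ i, dist (x i) (z₀ i) < δ/4 :=
    fun i => lt_of_le_of_lt (dist_le_pi_dist x z₀ i) (mem_ball.1 hx)
  have hy' : ∀ i, dist (y i) (z₀ i) < δ/4 :=
    fun i => lt_of_le_of_lt (dist_le_pi_dist y z₀ i) (mem_ball.1 hy)
  set w : ℕ → Fin N → ℂ := fun m i => if (i : ℕ) < m then y i else x i with hwdef
  have hw0 : w 0 = x := funext fun i => if_neg (Nat.not_lt_zero _)
  have hwN : w N = y := funext fun i => if_pos i.2
  have hwcoord : ∀ m i, dist (w m i) (z₀ i) < δ/4 := by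
    intro m i
    by_cases him : (i : ℕ) < m
    · simp only [hwdef, if_pos him]; exact hy' i
    · simp only [hwdef, if_neg him]; exact hx' i
  have hstep : ∀ k ∈ Finset.range N, dist (Φ (w k)) (Φ (w (k+1))) ≤ C₁ * dist x y := by
    intro k hk
    have hkN : k < N := Finset.mem_range.1 hk
    set K : Fin N := ⟨k, hkN⟩ with hK
    have hw_eq1 : w k = Function.update (w k) K (x K) := by
      funext i
      by_cases hik : i = K
      · subst hik
        rw [Function.update_self]
        simp only [hwdef, hK, if_neg (lt_irrefl k)]
      · rw [Function.update_of_ne hik]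
    have hw_eq2 : w (k+1) = Function.update (w k) K (y K) := by
      funext i
      by_cases hik : i = K
      · subst hik
        rw [Function.update_self]
        simp only [hwdef, hK]
        rw [if_pos (Nat.lt_succ_self k)]
      · rw [Function.update_of_ne hik]
        have hne : (i : ℕ) ≠ k := by
          simpa [hK, Fin.ext_iff] using hik
        simp only [hwdef]
        by_cases h2 : (i : ℕ) < k
        · rw [if_pos h2, if_pos (by omega)]
        · rw [if_neg h2, if_neg (by omega)]
      -- end
    calc dist (Φ (w k)) (Φ (w (k+1)))
        = dist (Φ (Function.update (w k) K (x K))) (Φ (Function.update (w k) K (y K))) := by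
          rw [← hw_eq1, ← hw_eq2]
      _ ≤ C₁ * dist (x K) (y K) := step (w k) (hwcoord k) K _ _ (hx' K) (hy' K)
      _ ≤ C₁ * dist x y := mul_le_mul_of_nonneg_left (dist_le_pi_dist x y K) hC₁0
  have htot : dist (Φ x) (Φ y) ≤ (N : ℝ) * (C₁ * dist x y) := by
    calc dist (Φ x) (Φ y) = dist (Φ (w 0)) (Φ (w N)) := by rw [hw0, hwN]
    _ ≤ ∑ k ∈ Finset.range N, dist (Φ (w k)) (Φ (w (k+1))) :=
        dist_le_range_sum_dist (fun m => Φ (w m)) N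
    _ ≤ ∑ _k ∈ Finset.range N, C₁ * dist x y := Finset.sum_le_sum hstep
    _ = (N : ℝ) * (C₁ * dist x y) := by
        rw [Finset.sum_const, Finset.card_range, nsmul_eq_mul]
  calc dist (Φ x) (Φ y) ≤ (N : ℝ) * (C₁ * dist x y) := htot
  _ = ((N : ℝ) * C₁) * dist x y := by ring
  _ ≤ (Real.nnabs ((N : ℝ) * C₁) : ℝ) * dist x y := by
      apply mul_le_mul_of_nonneg_right _ dist_nonneg
      rw [Real.coe_nnabs]
      exact le_abs_self _
  _ = (Real.nnabs ((N : ℝ) * (M / (δ/4))) : ℝ) * dist x y := by rw [hC₁]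



variable {n q : ℕ}

lemma updateZ_differentiableAt {N : ℕ} (k : Fin N) (ζ : ℂ) (z : Fin N → ℂ) :
    DifferentiableAt ℂ (fun z : Fin N → ℂ => Function.update z k ζ) z := by
  rw [differentiableAt_pi]
  intro i
  by_cases hik : i = k
  · subst hik; simp only [Function.update_self]; exact differentiableAt_const _
  · simp only [Function.update_of_ne hik]
    exact (ContinuousLinearMap.proj (R := ℂ) (φ := fun _ : Fin N => ℂ) i).differentiableAt

lemma continuous_updZ {N : ℕ} (k : Fin N) :
    Continuous (fun pr : (Fin N → ℂ) × ℂ => Function.update pr.1 k pr.2) := by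
  refine continuous_pi fun i => ?_
  by_cases hik : i = k
  · subst hik
    simpa only [Function.update_self] using (continuous_snd : Continuous fun pr : (Fin N → ℂ) × ℂ => pr.2)
  · simp only [Function.update_of_ne hik]
    exact (continuous_apply i).comp continuous_fst

/-- every continuous linear functional on `ℂ^N` is a combination of coordinates -/
lemma clm_eq_sum {N : ℕ} (L : (Fin N → ℂ) →L[ℂ] ℂ) :
    L = ∑ j, L (Pi.single j 1) • (ContinuousLinearMap.proj (R := ℂ) (φ := fun _ : Fin N => ℂ) j) := by
  apply ContinuousLinearMap.ext
  intro z
  have hz : z = ∑ j, z j • (Pi.single j (1 : ℂ) : Fin N → ℂ) := by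
    funext i
    rw [Finset.sum_apply]
    simp only [Pi.smul_apply, Pi.single_apply, smul_eq_mul, mul_ite, mul_one, mul_zero]
    rw [Finset.sum_ite_eq Finset.univ i fun j => z j]
    simp
  calc L z = L (∑ j, z j • (Pi.single j (1:ℂ) : Fin N → ℂ)) := by rw [← hz]
  _ = ∑ j, z j • L ((Pi.single j (1:ℂ) : Fin N → ℂ)) := by rw [map_sum]; simp_rw [L.map_smul]
  _ = (∑ j, L (Pi.single j 1) • (ContinuousLinearMap.proj (R := ℂ)
        (φ := fun _ : Fin N => ℂ) j)) z := by
    rw [ContinuousLinearMap.sum_apply]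
    refine Finset.sum_congr rfl fun j _ => ?_
    simp only [ContinuousLinearMap.smul_apply, ContinuousLinearMap.proj_apply, smul_eq_mul]
    ring


/-- the slice integrand, as a function of the point `z` and the circle parameter `θ` -/
def psi (f : (Fin n → ℂ) → ℂ) (i₀ : Fin n) (R : ℝ) (z : Fin n → ℂ) (θ : ℝ) : ℂ :=
  deriv (circleMap 0 R) θ •
    ((circleMap 0 R θ - z i₀)⁻¹ • f (Function.update z i₀ (circleMap 0 R θ)))

/-- the candidate extension at scale `R` -/
def gg (f : (Fin n → ℂ) → ℂ) (i₀ : Fin n) (R : ℝ) (z : Fin n → ℂ) : ℂ :=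
  (2 * Real.pi * Complex.I : ℂ)⁻¹ • ∮ ζ in C(0, R), (ζ - z i₀)⁻¹ • f (Function.update z i₀ ζ)

lemma gg_eq (f : (Fin n → ℂ) → ℂ) (i₀ : Fin n) (R : ℝ) (z : Fin n → ℂ) :
    gg f i₀ R z = (2 * Real.pi * Complex.I : ℂ)⁻¹ •
      ∫ θ in Set.Ioc (0:ℝ) (2 * Real.pi), psi f i₀ R z θ := by
  rw [gg, circleIntegral, intervalIntegral.integral_of_le (by positivity)]
  rfl

section Main

variable (hq : True)

set_option maxHeartbeats 1000000 in
lemma differentiableAt_gg (i₀ : Fin n) (hi₀ : q ≤ (i₀ : ℕ))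
    {f : (Fin n → ℂ) → ℂ} (hf : DifferentiableOn ℂ f {z : Fin n → ℂ | 0 < SQ q z})
    (hSQ_update : ∀ (z : Fin n → ℂ) (ζ : ℂ),
      SQ q (Function.update z i₀ ζ) = SQ q z - ‖z i₀‖ ^ 2 + ‖ζ‖ ^ 2)
    (hSQ_sub : ∀ z : Fin n → ℂ, -Qs q z ≤ SQ q z - ‖z i₀‖ ^ 2)
    (hQs_cont : Continuous (Qs q (n := n)))
    {R : ℝ} {z₀ : Fin n → ℂ} (hQ : Qs q z₀ < R ^ 2) (hzi : ‖z₀ i₀‖ < R) :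
    DifferentiableAt ℂ (gg f i₀ R) z₀ := by
  have hR0 : 0 < R := lt_of_le_of_lt (norm_nonneg _) hzi
  have hDopen : IsOpen {z : Fin n → ℂ | 0 < SQ q z} := by
    have : Continuous (SQ q (n := n)) := by
      refine continuous_finset_sum _ fun i _ => ?_
      exact continuous_const.mul (((continuous_apply i).norm).pow 2)
    exact isOpen_lt continuous_const this
  -- choose δ
  obtain ⟨ε₁, hε₁0, hε₁⟩ : ∃ ε₁ > 0, ball z₀ ε₁ ⊆ {z : Fin n → ℂ | Qs q z < R ^ 2} := by
    have : IsOpen {z : Fin n → ℂ | Qs q z < R ^ 2} := isOpen_lt hQs_cont continuous_const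
    exact Metric.isOpen_iff.1 this z₀ hQ
  set δ : ℝ := min (ε₁ / 4) ((R - ‖z₀ i₀‖) / 4) with hδdef
  have hδ0 : 0 < δ := lt_min (by linarith) (by linarith)
  have hδε₁ : 2 * δ < ε₁ := by
    have := min_le_left (ε₁ / 4) ((R - ‖z₀ i₀‖) / 4)
    simp only [← hδdef] at this; linarith
  set b : ℝ := ‖z₀ i₀‖ + 2 * δ with hbdef
  have hbR : b < R := by
    have := min_le_right (ε₁ / 4) ((R - ‖z₀ i₀‖) / 4)
    simp only [← hδdef] at this
    rw [hbdef]; linarith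
  have hQball : ∀ z ∈ closedBall z₀ (2 * δ), Qs q z < R ^ 2 := by
    intro z hz
    exact hε₁ (lt_of_le_of_lt (mem_closedBall.1 hz) hδε₁)
  have hnormi : ∀ z ∈ closedBall z₀ (2 * δ), ‖z i₀‖ ≤ b := by
    intro z hz
    have h1 : ‖z i₀ - z₀ i₀‖ ≤ 2 * δ := by
      have := dist_le_pi_dist z z₀ i₀
      rw [dist_eq_norm] at this
      exact le_trans this (mem_closedBall.1 hz)
    calc ‖z i₀‖ = ‖z₀ i₀ + (z i₀ - z₀ i₀)‖ := by ring_nf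
    _ ≤ ‖z₀ i₀‖ + ‖z i₀ - z₀ i₀‖ := norm_add_le _ _
    _ ≤ b := by rw [hbdef]; linarith
  have hmem : ∀ z ∈ closedBall z₀ (2 * δ), ∀ ζ : ℂ, ‖ζ‖ = R →
      Function.update z i₀ ζ ∈ {z : Fin n → ℂ | 0 < SQ q z} := by
    intro z hz ζ hζ
    have h1 := hSQ_sub z
    have h2 : Qs q z < R ^ 2 := hQball z hz
    simp only [mem_setOf_eq, hSQ_update z ζ, hζ]
    nlinarith
  have hne : ∀ z ∈ closedBall z₀ (2 * δ), ∀ ζ : ℂ, ‖ζ‖ = R → ζ - z i₀ ≠ 0 := by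
    intro z hz ζ hζ
    intro hcon
    have : ζ = z i₀ := by linear_combination hcon
    rw [this] at hζ
    have := hnormi z hz
    linarith [hζ ▸ this]
  have habs : ∀ θ : ℝ, ‖circleMap 0 R θ‖ = R := by
    intro θ
    rw [norm_circleMap_zero, abs_of_pos hR0]
  -- differentiability of the integrand in z
  have hΨdiff : ∀ (θ : ℝ), ∀ z ∈ ball z₀ (2 * δ), DifferentiableAt ℂ (fun z => psi f i₀ R z θ) z := by
    intro θ z hz
    have hzc : z ∈ closedBall z₀ (2 * δ) := ball_subset_closedBall hz
    set ζ := circleMap 0 R θ with hζdef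
    have hζR : ‖ζ‖ = R := habs θ
    have h1 : DifferentiableAt ℂ (fun z : Fin n → ℂ => (ζ - z i₀)⁻¹) z := by
      refine DifferentiableAt.inv ?_ (hne z hzc ζ hζR)
      exact (differentiableAt_const ζ).sub
        (ContinuousLinearMap.proj (R := ℂ) (φ := fun _ : Fin n => ℂ) i₀).differentiableAt
    have h2 : DifferentiableAt ℂ (fun z : Fin n → ℂ => f (Function.update z i₀ ζ)) z := by
      have hfAt : DifferentiableAt ℂ f (Function.update z i₀ ζ) :=
        hf.differentiableAt (hDopen.mem_nhds (hmem z hzc ζ hζR))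
      exact hfAt.comp z (updateZ_differentiableAt i₀ ζ z)
    have : DifferentiableAt ℂ (fun z : Fin n → ℂ =>
        deriv (circleMap 0 R) θ • ((ζ - z i₀)⁻¹ • f (Function.update z i₀ ζ))) z := by
      simp only [smul_eq_mul]
      exact (differentiableAt_const _).mul (h1.mul h2)
    exact this
  -- continuity of the integrand in θ
  have hΨcont : ∀ z ∈ closedBall z₀ (2 * δ), Continuous (fun θ => psi f i₀ R z θ) := by
    intro z hz
    rw [continuous_iff_continuousAt]
    intro θ
    have hζR : ‖circleMap 0 R θ‖ = R := habs θ
    have hc1 : Continuous (fun θ : ℝ => circleMap 0 R θ) := continuous_circleMap 0 R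
    have hup : Continuous (fun θ : ℝ => Function.update z i₀ (circleMap 0 R θ)) :=
      (continuous_updZ i₀).comp (continuous_const.prodMk hc1)
    have hcf : ContinuousAt (fun θ : ℝ => f (Function.update z i₀ (circleMap 0 R θ))) θ := by
      have hfAt : DifferentiableAt ℂ f (Function.update z i₀ (circleMap 0 R θ)) :=
        hf.differentiableAt (hDopen.mem_nhds (hmem z hz _ hζR))
      exact ContinuousAt.comp (x := θ) hfAt.continuousAt hup.continuousAt
    have hinv : ContinuousAt (fun θ : ℝ => (circleMap 0 R θ - z i₀)⁻¹) θ := by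
      refine ContinuousAt.inv₀ ((hc1.continuousAt).sub continuousAt_const) ?_
      exact hne z hz _ hζR
    have hder : Continuous (fun θ : ℝ => deriv (circleMap 0 R) θ) := by
      simp only [deriv_circleMap]
      exact (hc1.mul continuous_const)
    exact (hder.continuousAt.smul (hinv.smul hcf))
  -- bound
  obtain ⟨Mf, hMf⟩ : ∃ Mf, ∀ x ∈ (fun pr : (Fin n → ℂ) × ℂ => Function.update pr.1 i₀ pr.2) ''
      (closedBall z₀ (2 * δ) ×ˢ sphere (0:ℂ) R), ‖f x‖ ≤ Mf := by
    have hK : IsCompact ((fun pr : (Fin n → ℂ) × ℂ => Function.update pr.1 i₀ pr.2) ''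
        (closedBall z₀ (2 * δ) ×ˢ sphere (0:ℂ) R)) :=
      ((isCompact_closedBall _ _).prod (isCompact_sphere _ _)).image (continuous_updZ i₀)
    have hsub : ((fun pr : (Fin n → ℂ) × ℂ => Function.update pr.1 i₀ pr.2) ''
        (closedBall z₀ (2 * δ) ×ˢ sphere (0:ℂ) R)) ⊆ {z : Fin n → ℂ | 0 < SQ q z} := by
      rintro x ⟨⟨z, ζ⟩, ⟨hz, hζ⟩, rfl⟩
      exact hmem z hz ζ (by simpa [mem_sphere_iff_norm] using hζ)
    have hcont : ContinuousOn (fun x => ‖f x‖) ((fun pr : (Fin n → ℂ) × ℂ =>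
        Function.update pr.1 i₀ pr.2) '' (closedBall z₀ (2 * δ) ×ˢ sphere (0:ℂ) R)) :=
      (hf.continuousOn.mono hsub).norm
    rcases ((fun pr : (Fin n → ℂ) × ℂ => Function.update pr.1 i₀ pr.2) ''
        (closedBall z₀ (2 * δ) ×ˢ sphere (0:ℂ) R)).eq_empty_or_nonempty with he | hne'
    · exact ⟨0, by rw [he]; intro x hx; exact absurd hx (Set.notMem_empty x)⟩
    · obtain ⟨x₀, hx₀, hx₀max⟩ := hK.exists_isMaxOn hne' hcont
      exact ⟨‖f x₀‖, fun x hx => hx₀max hx⟩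
  have hMf0 : 0 ≤ Mf := by
    have hz₀ : z₀ ∈ closedBall z₀ (2 * δ) := mem_closedBall_self (by positivity)
    have hζ0 : (R : ℂ) ∈ sphere (0:ℂ) R := by
      simp [mem_sphere_iff_norm, Complex.norm_real, abs_of_pos hR0]
    exact le_trans (norm_nonneg _) (hMf _ ⟨⟨z₀, (R:ℂ)⟩, ⟨hz₀, hζ0⟩, rfl⟩)
  set M : ℝ := R * ((R - b)⁻¹ * Mf) with hMdef
  have hΨM : ∀ z ∈ closedBall z₀ (2 * δ), ∀ θ : ℝ, ‖psi f i₀ R z θ‖ ≤ M := by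
    intro z hz θ
    have hζR : ‖circleMap 0 R θ‖ = R := habs θ
    have hfb : ‖f (Function.update z i₀ (circleMap 0 R θ))‖ ≤ Mf := by
      refine hMf _ ⟨⟨z, circleMap 0 R θ⟩, ⟨hz, ?_⟩, rfl⟩
      simpa [mem_sphere_iff_norm] using hζR
    have hd : R - b ≤ ‖circleMap 0 R θ - z i₀‖ := by
      calc R - b ≤ ‖circleMap 0 R θ‖ - ‖z i₀‖ := by
            rw [hζR]; linarith [hnormi z hz]
      _ ≤ ‖circleMap 0 R θ - z i₀‖ := norm_sub_norm_le _ _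
    have hinv : ‖(circleMap 0 R θ - z i₀)⁻¹‖ ≤ (R - b)⁻¹ := by
      rw [norm_inv]
      exact inv_anti₀ (by linarith) hd
    have hderb : ‖deriv (circleMap 0 R) θ‖ = R := by
      rw [deriv_circleMap, norm_mul, hζR, Complex.norm_I, mul_one]
    rw [psi, norm_smul, norm_smul, hderb]
    refine mul_le_mul_of_nonneg_left ?_ hR0.le
    exact mul_le_mul hinv hfb (norm_nonneg _) (inv_nonneg.2 (by linarith))
  -- set up the dominated differentiation lemma
  set μ : Measure ℝ := volume.restrict (Set.Ioc (0:ℝ) (2 * Real.pi)) with hμdef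
  set F' : ℝ → (Fin n → ℂ) →L[ℂ] ℂ := fun θ =>
    ∑ j, (fderiv ℂ (fun z => psi f i₀ R z θ) z₀ (Pi.single j 1)) •
      (ContinuousLinearMap.proj (R := ℂ) (φ := fun _ : Fin n => ℂ) j) with hF'def
  have hF'eq : ∀ θ, F' θ = fderiv ℂ (fun z => psi f i₀ R z θ) z₀ :=
    fun θ => (clm_eq_sum _).symm
  have key : HasFDerivAt (fun z => ∫ θ, psi f i₀ R z θ ∂μ) (∫ θ, F' θ ∂μ) z₀ := by
    refine (_root_.hasFDerivAt_integral_of_dominated_loc_of_lip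
      (F := fun z θ => psi f i₀ R z θ) (F' := F') (x₀ := z₀)
      (bound := fun _ => (n : ℝ) * (M / ((2 * δ)/4)))
      (s := ball z₀ ((2 * δ)/4)) (ball_mem_nhds z₀ (by positivity)) ?_ ?_ ?_ ?_ ?_ ?_).2
    · -- measurability near z₀
      refine eventually_of_mem (ball_mem_nhds z₀ (by positivity : (0:ℝ) < 2 * δ)) ?_
      intro z hz
      exact ((hΨcont z (ball_subset_closedBall hz))).aestronglyMeasurable
    · -- integrability at z₀
      have hc := hΨcont z₀ (mem_closedBall_self (by positivity))
      rw [hμdef]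
      exact hc.integrableOn_Ioc
    · -- measurability of F'
      have hφ : ∀ j : Fin n, AEStronglyMeasurable
          (fun θ => fderiv ℂ (fun z => psi f i₀ R z θ) z₀ (Pi.single j 1)) μ := by
        intro j
        set m : ℕ := ⌈(2 * δ)⁻¹⌉₊ + 1 with hmdef
        have hm : ((m : ℝ))⁻¹ < 2 * δ := by
          have h1 : (2 * δ)⁻¹ ≤ (⌈(2 * δ)⁻¹⌉₊ : ℝ) := Nat.le_ceil _
          have h2 : (⌈(2 * δ)⁻¹⌉₊ : ℝ) < m := by rw [hmdef]; push_cast; linarith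
          have h3 : (0:ℝ) < m := lt_of_le_of_lt (Nat.cast_nonneg _) h2
          have h4 : (0:ℝ) < 2 * δ := by linarith
          rw [inv_lt_comm₀ h3 h4]
          linarith
        have hsingle : ‖(Pi.single j 1 : Fin n → ℂ)‖ ≤ 1 := by
          rw [pi_norm_le_iff_of_nonneg zero_le_one]
          intro i
          rcases eq_or_ne i j with rfl | hij
          · simp
          · simp [Pi.single_apply, if_neg hij]
        refine aestronglyMeasurable_of_tendsto_ae atTop
          (f := fun (k : ℕ) (θ : ℝ) => (((k + m : ℕ) : ℂ)) •
            (psi f i₀ R (z₀ + (((k + m : ℕ) : ℂ))⁻¹ • (Pi.single j 1 : Fin n → ℂ)) θ - psi f i₀ R z₀ θ))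
          (fun k => ?_) ?_
        · -- each approximant is measurable
          have hzball : z₀ + (((k + m : ℕ) : ℂ))⁻¹ • (Pi.single j 1 : Fin n → ℂ) ∈ closedBall z₀ (2 * δ) := by
            rw [mem_closedBall, dist_eq_norm]
            have : ‖(((k + m : ℕ) : ℂ))⁻¹ • (Pi.single j 1 : Fin n → ℂ)‖ ≤ ((m:ℝ))⁻¹ := by
              rw [norm_smul, norm_inv]
              have hkm : (m : ℝ) ≤ ‖((k + m : ℕ) : ℂ)‖ := by
                rw [Complex.norm_natCast]
                exact_mod_cast Nat.le_add_left m k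
              have hm0 : (0:ℝ) < m := by positivity
              calc ‖((k + m : ℕ) : ℂ)‖⁻¹ * ‖(Pi.single j 1 : Fin n → ℂ)‖
                  ≤ ‖((k + m : ℕ) : ℂ)‖⁻¹ * 1 := by
                    refine mul_le_mul_of_nonneg_left hsingle (by positivity)
                _ = ‖((k + m : ℕ) : ℂ)‖⁻¹ := mul_one _
                _ ≤ (m:ℝ)⁻¹ := by
                    exact inv_anti₀ hm0 hkm
            simp only [add_sub_cancel_left]
            linarith
          exact (((hΨcont _ hzball).sub (hΨcont z₀ (mem_closedBall_self
            (by positivity)))).fun_const_smul (((k + m : ℕ) : ℂ))).aestronglyMeasurable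
        · -- ae convergence
          refine Eventually.of_forall fun θ => ?_
          have hD : HasFDerivAt (fun z => psi f i₀ R z θ)
              (fderiv ℂ (fun z => psi f i₀ R z θ) z₀) z₀ :=
            (hΨdiff θ z₀ (mem_ball_self (by positivity))).hasFDerivAt
          have hc : Tendsto (fun k : ℕ => ‖(((k + m : ℕ) : ℂ))‖) atTop atTop := by
            simp only [Complex.norm_natCast]
            exact tendsto_natCast_atTop_atTop.comp (tendsto_add_atTop_nat m)
          exact hD.lim ((Pi.single j 1 : Fin n → ℂ)) hc
      refine Finset.aestronglyMeasurable_fun_sum _ fun j _ => ?_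
      exact (hφ j).smul aestronglyMeasurable_const
    · -- lipschitz
      refine Eventually.of_forall fun θ => ?_
      exact lipschitzOnWith_of_bounded (by positivity) (hΨdiff θ)
        (fun z hz => hΨM z (ball_subset_closedBall hz) θ)
    · -- bound integrable
      refine (integrableOn_const_iff).2 (Or.inr ?_)
      exact measure_Ioc_lt_top
    · -- differentiability ae
      refine Eventually.of_forall fun θ => ?_
      rw [hF'eq θ]
      exact (hΨdiff θ z₀ (mem_ball_self (by positivity))).hasFDerivAt
  -- conclude
  have : DifferentiableAt ℂ (fun z => (2 * Real.pi * Complex.I : ℂ)⁻¹ •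
      ∫ θ, psi f i₀ R z θ ∂μ) z₀ := key.differentiableAt.fun_const_smul _
  have heq : (fun z => (2 * Real.pi * Complex.I : ℂ)⁻¹ • ∫ θ, psi f i₀ R z θ ∂μ)
      = gg f i₀ R := by
    funext z
    rw [gg_eq]
  rwa [heq] at this

end Main


lemma lt_sqrt_add_one_sq (x y : ℝ) (h : x ≤ y) : x < (Real.sqrt y + 1) ^ 2 := by
  have h0 : 0 ≤ Real.sqrt y := Real.sqrt_nonneg _
  rcases le_or_gt 0 y with hy | hy
  · have : y = Real.sqrt y ^ 2 := (Real.sq_sqrt hy).symm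
    nlinarith
  · nlinarith

end HartogsAux

/-- The domain `D^{p,q} = {z ∈ ℂ^{p+q} : -|z_1|² - ⋯ - |z_q|² + |z_{q+1}|² + ⋯ + |z_{p+q}|² > 0}`
(the first `q` coordinates enter with a minus sign). -/
def Dpq (p q : ℕ) : Set (Fin (p+q) → ℂ) :=
  {z | 0 < ∑ i : Fin (p+q), (if (i : ℕ) < q then (-1 : ℝ) else 1) * ‖z i‖ ^ 2}

open HartogsAux Metric Set Function in
/-- For `p > 1` and `q > 0`, every holomorphic function on `D^{p,q}`
extends to a holomorphic function on `ℂ^{p+q}`. -/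
theorem holomorphic_on_Dpq_extends (p q : ℕ) (hp : 1 < p) (hq : 0 < q)
    (f : (Fin (p+q) → ℂ) → ℂ) (hf : DifferentiableOn ℂ f (Dpq p q)) :
    ∃ F : (Fin (p+q) → ℂ) → ℂ, Differentiable ℂ F ∧ Set.EqOn F f (Dpq p q) := by
  classical
  have hDset : Dpq p q = {z : Fin (p+q) → ℂ | 0 < SQ q z} := rfl
  rw [hDset] at hf ⊢
  have hqn : q < p + q := by omega
  have hq1n : q + 1 < p + q := by omega
  set i₀ : Fin (p+q) := ⟨q, hqn⟩ with hi₀def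
  set j₁ : Fin (p+q) := ⟨q+1, hq1n⟩ with hj₁def
  have hi₀ : q ≤ (i₀ : ℕ) := le_refl q
  have hj₁ : q ≤ (j₁ : ℕ) := by simp [hj₁def]
  have hij : i₀ ≠ j₁ := by simp [hi₀def, hj₁def, Fin.ext_iff]
  have hDopen : IsOpen {z : Fin (p+q) → ℂ | 0 < SQ q z} :=
    isOpen_lt continuous_const continuous_SQ
  -- the radius function
  set rr : (Fin (p+q) → ℂ) → ℝ := fun z => Real.sqrt (Qs q z) + ‖z i₀‖ + 1 with hrrdef
  have hrr_cont : Continuous rr :=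
    ((Real.continuous_sqrt.comp continuous_Qs).add (continuous_apply i₀).norm).add
      continuous_const
  have hrr_norm : ∀ z, ‖z i₀‖ < rr z := by
    intro z
    have := Real.sqrt_nonneg (Qs q z)
    rw [hrrdef]; dsimp only; linarith
  have hrr_pos : ∀ z, 0 < rr z := fun z => lt_of_le_of_lt (norm_nonneg _) (hrr_norm z)
  have hrr_Qs : ∀ z, Qs q z < (rr z) ^ 2 := by
    intro z
    have h1 : Qs q z = Real.sqrt (Qs q z) ^ 2 := (Real.sq_sqrt (Qs_nonneg z)).symm
    have h2 := Real.sqrt_nonneg (Qs q z)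
    have h3 := norm_nonneg (z i₀)
    rw [hrrdef]; dsimp only; nlinarith
  -- the extension
  set F : (Fin (p+q) → ℂ) → ℂ := fun z => gg f i₀ (rr z) z with hFdef
  -- radius independence
  have hwell : ∀ (z : Fin (p+q) → ℂ) (R : ℝ), rr z ≤ R → gg f i₀ R z = gg f i₀ (rr z) z := by
    intro z R hR
    have hdiffζ : ∀ ζ : ℂ, rr z ≤ ‖ζ‖ →
        DifferentiableAt ℂ (fun ζ : ℂ => (ζ - z i₀)⁻¹ • f (Function.update z i₀ ζ)) ζ := by
      intro ζ hζ
      have hupd : Function.update z i₀ ζ ∈ {z : Fin (p+q) → ℂ | 0 < SQ q z} := by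
        have h1 := SQ_sub_ge i₀ hi₀ z
        have h2 := hrr_Qs z
        have h3 : (rr z) ^ 2 ≤ ‖ζ‖ ^ 2 := by nlinarith [hrr_pos z, norm_nonneg ζ]
        simp only [Set.mem_setOf_eq, SQ_update_pos i₀ hi₀ z ζ]
        nlinarith
      have hne : ζ - z i₀ ≠ 0 := by
        intro hcon
        have hζz : ζ = z i₀ := by linear_combination hcon
        have := hrr_norm z
        rw [hζz] at hζ
        linarith
      have h1 : DifferentiableAt ℂ (fun ζ : ℂ => (ζ - z i₀)⁻¹) ζ :=
        (differentiableAt_fun_id.sub (differentiableAt_const _)).inv hne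
      have h2 : DifferentiableAt ℂ (fun ζ : ℂ => f (Function.update z i₀ ζ)) ζ :=
        (hf.differentiableAt (hDopen.mem_nhds hupd)).comp ζ (update_differentiableAt z i₀ ζ)
      simp only [smul_eq_mul]
      exact h1.mul h2
    have key : (∮ ζ in C(0, R), (ζ - z i₀)⁻¹ • f (Function.update z i₀ ζ))
        = ∮ ζ in C(0, rr z), (ζ - z i₀)⁻¹ • f (Function.update z i₀ ζ) := by
      refine Complex.circleIntegral_eq_of_differentiable_on_annulus_off_countable (hrr_pos z) hR
        countable_empty ?_ ?_
      · intro ζ hζ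
        have h1 : rr z ≤ ‖ζ‖ := by
          have := hζ.2
          simp only [mem_ball, dist_zero_right, not_lt] at this
          exact this
        exact (hdiffζ ζ h1).continuousAt.continuousWithinAt
      · intro ζ hζ
        have h1 : rr z ≤ ‖ζ‖ := by
          have := hζ.1.2
          simp only [mem_closedBall, dist_zero_right, not_le] at this
          exact this.le
        exact hdiffζ ζ h1
    rw [gg, gg, key]
  -- differentiability
  have hFdiff : Differentiable ℂ F := by
    intro z₀
    set R : ℝ := rr z₀ + 1 with hRdef
    have hO : IsOpen {z : Fin (p+q) → ℂ | rr z < R} :=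
      isOpen_lt hrr_cont continuous_const
    have hz₀O : z₀ ∈ {z : Fin (p+q) → ℂ | rr z < R} := by
      simp only [Set.mem_setOf_eq, hRdef]; linarith
    have hgd : DifferentiableAt ℂ (gg f i₀ R) z₀ := by
      refine differentiableAt_gg i₀ hi₀ hf (SQ_update_pos i₀ hi₀) (SQ_sub_ge i₀ hi₀)
        continuous_Qs ?_ ?_
      · have h1 := hrr_Qs z₀
        have h2 := hrr_pos z₀
        have : (rr z₀)^2 ≤ R^2 := by rw [hRdef]; nlinarith
        linarith
      · have := hrr_norm z₀
        rw [hRdef]; linarith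
    have hev : F =ᶠ[nhds z₀] gg f i₀ R := by
      refine Filter.eventually_of_mem (hO.mem_nhds hz₀O) ?_
      intro z hz
      rw [hFdef]
      exact (hwell z R (le_of_lt hz)).symm
    exact (hev.differentiableAt_iff).2 hgd
  -- Cauchy formula on the good region
  have hCauchy : ∀ z : Fin (p+q) → ℂ, 0 < SQ q z - ‖z i₀‖ ^ 2 → F z = f z := by
    intro z hz
    have hdiffAll : ∀ ζ : ℂ, DifferentiableAt ℂ (fun ζ : ℂ => f (Function.update z i₀ ζ)) ζ := by
      intro ζ
      have hupd : Function.update z i₀ ζ ∈ {z : Fin (p+q) → ℂ | 0 < SQ q z} := by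
        simp only [Set.mem_setOf_eq, SQ_update_pos i₀ hi₀ z ζ]
        nlinarith [norm_nonneg ζ]
      exact (hf.differentiableAt (hDopen.mem_nhds hupd)).comp ζ (update_differentiableAt z i₀ ζ)
    have hw : z i₀ ∈ ball (0:ℂ) (rr z) := by
      simp only [mem_ball, dist_zero_right]
      exact hrr_norm z
    have key := Complex.two_pi_I_inv_smul_circleIntegral_sub_inv_smul_of_differentiable_on_off_countable
      (f := fun ζ : ℂ => f (Function.update z i₀ ζ)) (c := 0) (R := rr z) (s := ∅)
      countable_empty hw
      (fun ζ _ => (hdiffAll ζ).continuousAt.continuousWithinAt)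
      (fun ζ _ => hdiffAll ζ)
    simp only [Function.update_eq_self] at key
    rw [hFdef]
    exact key
  -- analytic continuation in the `j₁` slice
  have hEq : Set.EqOn F f {z : Fin (p+q) → ℂ | 0 < SQ q z} := by
    intro z hz
    set c : ℝ := ‖z j₁‖ ^ 2 - SQ q z with hcdef
    set c₂ : ℝ := ‖z j₁‖ ^ 2 + ‖z i₀‖ ^ 2 - SQ q z with hc₂def
    set h : ℂ → ℂ := fun u => F (Function.update z j₁ u) - f (Function.update z j₁ u) with hhdef
    set Ω : Set ℂ := {u : ℂ | c < ‖u‖ ^ 2} with hΩdef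
    have hΩopen : IsOpen Ω := isOpen_lt continuous_const (continuous_norm.pow 2)
    have hupdSQ : ∀ u : ℂ, SQ q (Function.update z j₁ u) = SQ q z - ‖z j₁‖ ^ 2 + ‖u‖ ^ 2 :=
      SQ_update_pos j₁ hj₁ z
    have hmemΩ : ∀ u ∈ Ω, Function.update z j₁ u ∈ {z : Fin (p+q) → ℂ | 0 < SQ q z} := by
      intro u hu
      simp only [Set.mem_setOf_eq, hupdSQ u]
      have : c < ‖u‖ ^ 2 := hu
      rw [hcdef] at this
      linarith
    have hhd : DifferentiableOn ℂ h Ω := by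
      intro u hu
      have h1 : DifferentiableAt ℂ (fun u : ℂ => F (Function.update z j₁ u)) u :=
        (hFdiff _).comp u (update_differentiableAt z j₁ u)
      have h2 : DifferentiableAt ℂ (fun u : ℂ => f (Function.update z j₁ u)) u :=
        (hf.differentiableAt (hDopen.mem_nhds (hmemΩ u hu))).comp u
          (update_differentiableAt z j₁ u)
      exact (h1.sub h2).differentiableWithinAt
    have hanalytic : AnalyticOnNhd ℂ h Ω := hhd.analyticOnNhd hΩopen
    set u₀ : ℂ := ((Real.sqrt (max c c₂) + 1 : ℝ) : ℂ) with hu₀def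
    have hu₀norm : ‖u₀‖ = Real.sqrt (max c c₂) + 1 := by
      rw [hu₀def, Complex.norm_real, Real.norm_of_nonneg (by positivity)]
    have hu₀Ω : u₀ ∈ Ω := by
      simp only [hΩdef, Set.mem_setOf_eq, hu₀norm]
      exact lt_sqrt_add_one_sq c (max c c₂) (le_max_left _ _)
    have hO'open : IsOpen {u : ℂ | c₂ < ‖u‖ ^ 2} :=
      isOpen_lt continuous_const (continuous_norm.pow 2)
    have hO'sub : ∀ u ∈ {u : ℂ | c₂ < ‖u‖ ^ 2}, h u = 0 := by
      intro u hu
      have hw : 0 < SQ q (Function.update z j₁ u) - ‖(Function.update z j₁ u) i₀‖ ^ 2 := by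
        rw [Function.update_of_ne hij, hupdSQ u]
        have : c₂ < ‖u‖ ^ 2 := hu
        rw [hc₂def] at this
        linarith
      rw [hhdef]
      dsimp only
      rw [hCauchy _ hw, sub_self]
    have hu₀O' : u₀ ∈ {u : ℂ | c₂ < ‖u‖ ^ 2} := by
      simp only [Set.mem_setOf_eq, hu₀norm]
      exact lt_sqrt_add_one_sq c₂ (max c c₂) (le_max_right _ _)
    have hev : h =ᶠ[nhds u₀] 0 :=
      Filter.eventually_of_mem (hO'open.mem_nhds hu₀O') hO'sub
    have hzero := hanalytic.eqOn_zero_of_preconnected_of_eventuallyEq_zero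
      (isPreconnected_norm_sq_gt c) hu₀Ω hev
    have hzΩ : z j₁ ∈ Ω := by
      simp only [hΩdef, Set.mem_setOf_eq, hcdef]
      have : 0 < SQ q z := hz
      linarith
    have := hzero hzΩ
    rw [hhdef] at this
    simp only [Function.update_eq_self, Pi.zero_apply] at this
    exact sub_eq_zero.1 this
  exact ⟨F, hFdiff, hEq⟩


end
end

section
/- Let f : ℂ^{p+q} → ℂ^{p+q} be a holomorphic map preserving the null cone ∂D^{p,q} = {z : -Σ_{i≤q}|z_i|² + Σ_{i>q}|z_i|² = 0} with f(0) = 0 and with invertible complex Jacobian at 0. Then the complex Jacobian Jac_ℂ f(0), as a linear map, also preserves the null cone ∂D^{p,q}. -/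
noncomputable section

/-- The indefinite Hermitian form `φ(z) = -Σ_{i≤q} |z_i|² + Σ_{i>q} |z_i|²`. -/
def formPQ (p q : ℕ) (z : Fin (p+q) → ℂ) : ℝ :=
  ∑ i : Fin (p+q), (if (i : ℕ) < q then (-1 : ℝ) else 1) * ‖z i‖ ^ 2

/-- The null cone `∂D^{p,q} = {z : φ(z) = 0}`. -/
def nullCone (p q : ℕ) : Set (Fin (p+q) → ℂ) := {z | formPQ p q z = 0}

lemma formPQ_smul (p q : ℕ) (c : ℂ) (z : Fin (p+q) → ℂ) :
    formPQ p q (c • z) = ‖c‖ ^ 2 * formPQ p q z := by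
  simp only [formPQ, Finset.mul_sum]
  refine Finset.sum_congr rfl fun i _ => ?_
  simp [norm_smul, mul_pow]

lemma smul_mem_nullCone (p q : ℕ) (c : ℂ) {z : Fin (p+q) → ℂ}
    (hz : z ∈ nullCone p q) : c • z ∈ nullCone p q := by
  simp only [nullCone, Set.mem_setOf_eq] at hz ⊢
  rw [formPQ_smul, hz, mul_zero]

lemma isClosed_nullCone (p q : ℕ) : IsClosed (nullCone p q) := by
  have : Continuous (formPQ p q) := by
    exact continuous_finset_sum _ fun i _ =>
      continuous_const.mul (((continuous_apply i).norm).pow 2)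
  exact isClosed_eq this continuous_const

/-- Let `f : ℂ^{p+q} → ℂ^{p+q}` be a holomorphic map preserving the
null cone `∂D^{p,q}`, with `f(0) = 0` and invertible complex Jacobian at `0`. Then the
complex Jacobian of `f` at `0`, as a linear map, also preserves the null cone. -/
theorem jacobian_preserves_null_cone (p q : ℕ)
    (f : (Fin (p+q) → ℂ) → (Fin (p+q) → ℂ)) (hf : Differentiable ℂ f)
    (hcone : Set.MapsTo f (nullCone p q) (nullCone p q))
    (h0 : f 0 = 0) (hjac : Function.Bijective (fderiv ℂ f 0)) :
    ∀ z ∈ nullCone p q, fderiv ℂ f 0 z ∈ nullCone p q := by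
  intro z hz
  have hd : HasFDerivAt f (fderiv ℂ f 0) 0 := (hf 0).hasFDerivAt
  have hc : Filter.Tendsto (fun t : ℂ => ‖t⁻¹‖) (nhdsWithin 0 {0}ᶜ) Filter.atTop :=
    tendsto_norm_inv_nhdsNE_zero_atTop
  have hlim := hd.lim z hc
  have hne : (nhdsWithin (0:ℂ) {0}ᶜ).NeBot := by
    exact Module.punctured_nhds_neBot ℂ ℂ 0
  refine (isClosed_nullCone p q).mem_of_tendsto hlim ?_
  filter_upwards [self_mem_nhdsWithin] with t ht
  have ht0 : t ≠ 0 := by simpa using ht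
  have h1 : t • z ∈ nullCone p q := smul_mem_nullCone p q t hz
  have h2 : f (t • z) ∈ nullCone p q := hcone h1
  have := smul_mem_nullCone p q t⁻¹ h2
  simpa [h0, inv_inv, ht0] using this

end
end
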